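/- For n ≥ 3 and α ≥ n/(n−2), the radially symmetric function u(x',x_n) with u = h(r)^α + h(r)^{−α}x_n² for |x_n| < h(r)^α and u = 2|x_n| otherwise, where r = |x'| and h(r) = max(r−1,0), satisfies: in the region {r > 1, |x_n| < h(r)^α}, det D²u = 2α^{n−1}(α−1) h(r)^{α(n−2)−n} (1 − (x_n/h(r)^α)²)^{n−1} / r^{n−2}, and this is locally bounded. -/

import Mathlib

private lemma hd_aux (c : ℝ) {x : ℝ} (hx : 1 < x) :
    HasDerivAt (fun y : ℝ => (y - 1) ^ c) (c * (x - 1) ^ (c - 1)) x := by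
  have h1 : HasDerivAt (fun y : ℝ => y - 1) 1 x := (hasDerivAt_id x).sub_const 1
  have h2 : HasDerivAt (fun z : ℝ => z ^ c) (c * (x - 1) ^ (c - 1)) (x - 1) :=
    Real.hasDerivAt_rpow_const (Or.inl (sub_ne_zero_of_ne hx.ne'))
  simpa [Function.comp_def] using h2.comp x h1

private lemma hasF_aux (a b c d : ℝ) (p : ℝ × ℝ) (hp : 1 < p.1) :
    HasFDerivAt (fun q : ℝ × ℝ => a * (q.1 - 1) ^ b + c * (q.1 - 1) ^ d * q.2 ^ 2)
      ((a * (b * (p.1 - 1) ^ (b - 1)) + c * (d * (p.1 - 1) ^ (d - 1)) * p.2 ^ 2) •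
          ContinuousLinearMap.fst ℝ ℝ ℝ +
        (c * (p.1 - 1) ^ d * (2 * p.2)) • ContinuousLinearMap.snd ℝ ℝ ℝ) p := by
  have hb : HasFDerivAt (fun q : ℝ × ℝ => (q.1 - 1) ^ b)
      ((b * (p.1 - 1) ^ (b - 1)) • ContinuousLinearMap.fst ℝ ℝ ℝ) p :=
    (hd_aux b hp).comp_hasFDerivAt p hasFDerivAt_fst
  have hdd : HasFDerivAt (fun q : ℝ × ℝ => (q.1 - 1) ^ d)
      ((d * (p.1 - 1) ^ (d - 1)) • ContinuousLinearMap.fst ℝ ℝ ℝ) p :=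
    (hd_aux d hp).comp_hasFDerivAt p hasFDerivAt_fst
  have hsq : HasFDerivAt (fun q : ℝ × ℝ => q.2 ^ 2)
      ((2 * p.2) • ContinuousLinearMap.snd ℝ ℝ ℝ) p := by
    have h2 : HasDerivAt (fun z : ℝ => z ^ 2) (2 * p.2) p.2 := by
      simpa using hasDerivAt_pow 2 p.2
    exact h2.comp_hasFDerivAt p hasFDerivAt_snd
  have h := (hb.const_mul a).add ((hdd.const_mul c).mul hsq)
  apply h.congr_fderiv
  apply ContinuousLinearMap.ext
  intro v
  simp [smul_smul]
  ring

private lemma hasF2_aux (c d : ℝ) (p : ℝ × ℝ) (hp : 1 < p.1) :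
    HasFDerivAt (fun q : ℝ × ℝ => c * (q.1 - 1) ^ d * q.2)
      ((c * (d * (p.1 - 1) ^ (d - 1)) * p.2) • ContinuousLinearMap.fst ℝ ℝ ℝ +
        (c * (p.1 - 1) ^ d) • ContinuousLinearMap.snd ℝ ℝ ℝ) p := by
  have hdd : HasFDerivAt (fun q : ℝ × ℝ => (q.1 - 1) ^ d)
      ((d * (p.1 - 1) ^ (d - 1)) • ContinuousLinearMap.fst ℝ ℝ ℝ) p :=
    (hd_aux d hp).comp_hasFDerivAt p hasFDerivAt_fst
  have hsn : HasFDerivAt (fun q : ℝ × ℝ => q.2) (ContinuousLinearMap.snd ℝ ℝ ℝ) p :=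
    hasFDerivAt_snd
  have h := (hdd.const_mul c).mul hsn
  apply h.congr_fderiv
  apply ContinuousLinearMap.ext
  intro v
  simp [smul_smul]
  ring

/-- Second-order partial derivative of U : ℝ × ℝ → ℝ in directions e, e'. -/
noncomputable def pd2 (U : ℝ × ℝ → ℝ) (e e' : ℝ × ℝ) (p : ℝ × ℝ) : ℝ :=
  fderiv ℝ (fun x => fderiv ℝ U x e) p e'

/-- The Hessian determinant, in cylindrical coordinates (r, xₙ), of the
rotationally symmetric function x ↦ U(|x'|, xₙ) on ℝⁿ:
(U_rr U_nn − U_rn²) · (U_r/r)^{n−2}. -/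
noncomputable def cylDet (n : ℕ) (U : ℝ × ℝ → ℝ) (p : ℝ × ℝ) : ℝ :=
  (pd2 U (1, 0) (1, 0) p * pd2 U (0, 1) (0, 1) p -
      pd2 U (1, 0) (0, 1) p * pd2 U (0, 1) (1, 0) p) *
    (fderiv ℝ U p (1, 0) / p.1) ^ (n - 2)

/-- for n ≥ 3 and α ≥ n/(n−2), the function
U(r,xₙ) = h(r)^α + h(r)^{−α} xₙ² (h(r) = (r−1)₊) satisfies, in
{r > 1, |xₙ| < h(r)^α},
det D²u = 2α^{n−1}(α−1) h(r)^{α(n−2)−n} (1 − (xₙ/h(r)^α)²)^{n−1} / r^{n−2},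
and this quantity is locally bounded. -/
theorem stmt_11 (n : ℕ) (hn : 3 ≤ n) (α : ℝ) (hα : (n : ℝ) / ((n : ℝ) - 2) ≤ α)
    (h : ℝ → ℝ) (hh : ∀ r : ℝ, h r = max (r - 1) 0)
    (U : ℝ × ℝ → ℝ)
    (hU : ∀ p : ℝ × ℝ, |p.2| < h p.1 ^ α →
      U p = h p.1 ^ α + h p.1 ^ (-α) * p.2 ^ 2) :
    (∀ p : ℝ × ℝ, 1 < p.1 → |p.2| < h p.1 ^ α →
        cylDet n U p =
          2 * α ^ (n - 1) * (α - 1) * h p.1 ^ (α * ((n : ℝ) - 2) - n) *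
            (1 - (p.2 / h p.1 ^ α) ^ 2) ^ (n - 1) / p.1 ^ (n - 2)) ∧
    (∀ R : ℝ, 1 < R → ∃ C : ℝ, ∀ p : ℝ × ℝ, 1 < p.1 → p.1 ≤ R → |p.2| < h p.1 ^ α →
        2 * α ^ (n - 1) * (α - 1) * h p.1 ^ (α * ((n : ℝ) - 2) - n) *
            (1 - (p.2 / h p.1 ^ α) ^ 2) ^ (n - 1) / p.1 ^ (n - 2) ≤ C) := by
  have hn2 : (0:ℝ) < (n:ℝ) - 2 := by
    have h3 : (3:ℝ) ≤ (n:ℝ) := by exact_mod_cast hn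
    linarith
  have hα1 : 1 < α := by
    have : (1:ℝ) < (n:ℝ)/((n:ℝ)-2) := by
      rw [lt_div_iff₀ hn2]; linarith
    linarith
  have hα0 : 0 < α := by linarith
  set S : Set (ℝ × ℝ) := {q : ℝ × ℝ | 1 < q.1 ∧ |q.2| < (q.1 - 1) ^ α} with hSdef
  have hS_open : IsOpen S := by
    rw [isOpen_iff_mem_nhds]
    rintro q ⟨hq1, hq2⟩
    have h1 : ∀ᶠ x : ℝ × ℝ in nhds q, 1 < x.1 :=
      Filter.eventually_of_mem
        ((isOpen_lt continuous_const continuous_fst).mem_nhds hq1) (fun x hx => hx)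
    have ca : ContinuousAt (fun x : ℝ × ℝ => (x.1 - 1) ^ α) q :=
      ((continuous_fst.sub continuous_const).continuousAt).rpow_const
        (Or.inl (sub_ne_zero_of_ne hq1.ne'))
    have h2 : ∀ᶠ x : ℝ × ℝ in nhds q, |x.2| < (x.1 - 1) ^ α :=
      (continuous_snd.abs.continuousAt).eventually_lt ca hq2
    filter_upwards [h1, h2] with x hx1 hx2
    exact ⟨hx1, hx2⟩
  have hmax : ∀ q : ℝ × ℝ, q ∈ S → h q.1 = q.1 - 1 := by
    intro q hq
    rw [hh]
    exact max_eq_left (by linarith [hq.1])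
  have hUV : ∀ q ∈ S, U q = 1 * (q.1 - 1) ^ α + 1 * (q.1 - 1) ^ (-α) * q.2 ^ 2 := by
    intro q hq
    have hm := hmax q hq
    rw [hU q (by rw [hm]; exact hq.2), hm]
    ring
  have hUd : ∀ q ∈ S, HasFDerivAt U
      ((1 * (α * (q.1 - 1) ^ (α - 1)) + 1 * ((-α) * (q.1 - 1) ^ (-α - 1)) * q.2 ^ 2) •
          ContinuousLinearMap.fst ℝ ℝ ℝ +
        (1 * (q.1 - 1) ^ (-α) * (2 * q.2)) • ContinuousLinearMap.snd ℝ ℝ ℝ) q := by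
    intro q hq
    exact (hasF_aux 1 α 1 (-α) q hq.1).congr_of_eventuallyEq
      (Filter.eventuallyEq_of_mem (hS_open.mem_nhds hq) (fun x hx => hUV x hx))
  have hw1 : ∀ q ∈ S, fderiv ℝ U q (1, 0) =
      α * (q.1 - 1) ^ (α - 1) + (-α) * (q.1 - 1) ^ (-α - 1) * q.2 ^ 2 := by
    intro q hq
    rw [(hUd q hq).fderiv]
    simp
  have hw2 : ∀ q ∈ S, fderiv ℝ U q (0, 1) = 2 * (q.1 - 1) ^ (-α) * q.2 := by
    intro q hq
    rw [(hUd q hq).fderiv]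
    simp
    ring
  constructor
  · intro p hp1 hp2
    have hps : h p.1 = p.1 - 1 := by
      rw [hh]; exact max_eq_left (by linarith)
    have hpS : p ∈ S := ⟨hp1, by rw [← hps]; exact hp2⟩
    -- second derivatives
    have e1 : (fun x => fderiv ℝ U x (1, 0)) =ᶠ[nhds p]
        (fun q : ℝ × ℝ => α * (q.1 - 1) ^ (α - 1) + (-α) * (q.1 - 1) ^ (-α - 1) * q.2 ^ 2) :=
      Filter.eventuallyEq_of_mem (hS_open.mem_nhds hpS) (fun x hx => hw1 x hx)
    have e2 : (fun x => fderiv ℝ U x (0, 1)) =ᶠ[nhds p]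
        (fun q : ℝ × ℝ => 2 * (q.1 - 1) ^ (-α) * q.2) :=
      Filter.eventuallyEq_of_mem (hS_open.mem_nhds hpS) (fun x hx => hw2 x hx)
    have hD1 := hasF_aux α (α - 1) (-α) (-α - 1) p hp1
    have hD2 := hasF2_aux 2 (-α) p hp1
    have h11 : pd2 U (1, 0) (1, 0) p =
        α * ((α - 1) * (p.1 - 1) ^ (α - 1 - 1)) +
          (-α) * ((-α - 1) * (p.1 - 1) ^ (-α - 1 - 1)) * p.2 ^ 2 := by
      rw [pd2, e1.fderiv_eq, hD1.fderiv]
      simp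
    have h12 : pd2 U (1, 0) (0, 1) p = (-α) * (p.1 - 1) ^ (-α - 1) * (2 * p.2) := by
      rw [pd2, e1.fderiv_eq, hD1.fderiv]
      simp
    have h21 : pd2 U (0, 1) (1, 0) p = 2 * ((-α) * (p.1 - 1) ^ (-α - 1)) * p.2 := by
      rw [pd2, e2.fderiv_eq, hD2.fderiv]
      simp
    have h22 : pd2 U (0, 1) (0, 1) p = 2 * (p.1 - 1) ^ (-α) := by
      rw [pd2, e2.fderiv_eq, hD2.fderiv]
      simp
    rw [cylDet, h11, h12, h21, h22, hw1 p hpS, hps]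
    -- algebra
    have hs : (0:ℝ) < p.1 - 1 := by linarith
    set s : ℝ := p.1 - 1 with hsdef
    set t : ℝ := p.2 with htdef
    set A : ℝ := s ^ α with hAdef
    have hA : 0 < A := Real.rpow_pos_of_pos hs α
    have hAs : A = s ^ α := hAdef
    have es1 : s ^ (α - 1) = A / s := by rw [hAdef, Real.rpow_sub hs, Real.rpow_one]
    have es2 : s ^ (α - 1 - 1) = A / s ^ 2 := by
      rw [show (α - 1 - 1 : ℝ) = α - (2:ℕ) by push_cast; ring, hAdef,
        Real.rpow_sub hs, Real.rpow_natCast]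
    have es3 : s ^ (-α) = A⁻¹ := by
      rw [hAdef, Real.rpow_neg hs.le]
    have es4 : s ^ (-α - 1) = (A * s)⁻¹ := by
      rw [show (-α - 1 : ℝ) = -(α + 1) by ring, Real.rpow_neg hs.le, hAdef,
        Real.rpow_add hs, Real.rpow_one]
    have es5 : s ^ (-α - 1 - 1) = (A * s ^ 2)⁻¹ := by
      rw [show (-α - 1 - 1 : ℝ) = -(α + (2:ℕ)) by push_cast; ring, Real.rpow_neg hs.le,
        hAdef, Real.rpow_add hs, Real.rpow_natCast]
    have es6 : s ^ (α * ((n:ℝ) - 2) - (n:ℝ)) = A ^ (n - 2) / s ^ n := by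
      rw [Real.rpow_sub hs, Real.rpow_natCast, Real.rpow_mul hs.le, ← hAdef,
        show ((n:ℝ) - 2) = ((n - 2 : ℕ) : ℝ) by
          push_cast [Nat.cast_sub (by omega : 2 ≤ n)]; ring,
        Real.rpow_natCast]
    rw [es1, es2, es3, es4, es5, es6]
    clear_value s t A
    clear hAdef hsdef htdef es1 es2 es3 es4 es5 es6 hAs h11 h12 h21 h22 e1 e2 hD1 hD2 hp2 hps
    obtain ⟨m, rfl⟩ : ∃ m, n = m + 3 := ⟨n - 3, by omega⟩
    have hm2 : m + 3 - 2 = m + 1 := by omega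
    have hm1 : m + 3 - 1 = m + 2 := by omega
    rw [hm1, hm2]
    have hr0 : (0:ℝ) < p.1 := by linarith
    have hbase : (α * (A / s) + (-α) * (A * s)⁻¹ * t ^ 2) / p.1 =
        α * (A ^ 2 - t ^ 2) / (A * s * p.1) := by
      field_simp
      ring
    have hq : 1 - (t / A) ^ 2 = (A ^ 2 - t ^ 2) / A ^ 2 := by
      field_simp
    rw [hbase, hq]
    have hne1 : A ^ 2 * s ^ 2 * (A * s * p.1) ^ (m + 1) ≠ 0 := by positivity
    have hne2 : s ^ (m + 3) * (A ^ 2) ^ (m + 2) * p.1 ^ (m + 1) ≠ 0 := by positivity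
    trans ((2 * α * (α - 1) * (A ^ 2 - t ^ 2) / (A ^ 2 * s ^ 2)) *
        (α * (A ^ 2 - t ^ 2) / (A * s * p.1)) ^ (m + 1))
    · congr 1
      field_simp
      ring
    · trans ((2 * α ^ (m + 2) * (α - 1) * A ^ (m + 1) * (A ^ 2 - t ^ 2) ^ (m + 2)) /
          (s ^ (m + 3) * (A ^ 2) ^ (m + 2) * p.1 ^ (m + 1)))
      · rw [div_pow, div_mul_div_comm, div_eq_div_iff hne1 hne2]
        simp only [mul_pow]
        ring
      · rw [div_pow]
        ring
  · intro R hR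
    refine ⟨2 * α ^ (n - 1) * (α - 1) * (R - 1) ^ (α * ((n:ℝ) - 2) - (n:ℝ)), ?_⟩
    intro p hp1 hpR hp2
    have hps : h p.1 = p.1 - 1 := by
      rw [hh]; exact max_eq_left (by linarith)
    rw [hps] at hp2 ⊢
    have hs : (0:ℝ) < p.1 - 1 := by linarith
    have hA : (0:ℝ) < (p.1 - 1) ^ α := Real.rpow_pos_of_pos hs α
    have hβ : 0 ≤ α * ((n:ℝ) - 2) - (n:ℝ) := by
      have := (div_le_iff₀ hn2).mp hα
      linarith
    have hK : (0:ℝ) ≤ 2 * α ^ (n - 1) * (α - 1) :=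
      mul_nonneg (mul_nonneg (by norm_num) (pow_nonneg hα0.le _)) (by linarith)
    have hQ1 : (p.2 / (p.1 - 1) ^ α) ^ 2 < 1 := by
      rw [div_pow, div_lt_one (by positivity)]
      have : |p.2| ^ 2 < ((p.1 - 1) ^ α) ^ 2 := by
        apply pow_lt_pow_left₀ hp2 (abs_nonneg _)
        norm_num
      simpa [sq_abs] using this
    have hQnn : (0:ℝ) ≤ 1 - (p.2 / (p.1 - 1) ^ α) ^ 2 := by nlinarith
    have hQle : (1 - (p.2 / (p.1 - 1) ^ α) ^ 2) ^ (n - 1) ≤ 1 :=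
      pow_le_one₀ hQnn (by nlinarith [sq_nonneg (p.2 / (p.1 - 1) ^ α)])
    have hrp : (1:ℝ) ≤ p.1 ^ (n - 2) := by
      calc (1:ℝ) = 1 ^ (n-2) := (one_pow _).symm
        _ ≤ p.1 ^ (n - 2) := pow_le_pow_left₀ (by norm_num) (by linarith) _
    have hsR : (p.1 - 1) ^ (α * ((n:ℝ) - 2) - (n:ℝ)) ≤ (R - 1) ^ (α * ((n:ℝ) - 2) - (n:ℝ)) :=
      Real.rpow_le_rpow hs.le (by linarith) hβ
    have hsnn : (0:ℝ) ≤ (p.1 - 1) ^ (α * ((n:ℝ) - 2) - (n:ℝ)) := (Real.rpow_pos_of_pos hs _).le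
    calc 2 * α ^ (n - 1) * (α - 1) * (p.1 - 1) ^ (α * ((n:ℝ) - 2) - (n:ℝ)) *
            (1 - (p.2 / (p.1 - 1) ^ α) ^ 2) ^ (n - 1) / p.1 ^ (n - 2)
        ≤ 2 * α ^ (n - 1) * (α - 1) * (p.1 - 1) ^ (α * ((n:ℝ) - 2) - (n:ℝ)) *
            (1 - (p.2 / (p.1 - 1) ^ α) ^ 2) ^ (n - 1) := by
          apply div_le_self _ hrp
          exact mul_nonneg (mul_nonneg hK hsnn) (pow_nonneg hQnn _)
      _ ≤ 2 * α ^ (n - 1) * (α - 1) * (p.1 - 1) ^ (α * ((n:ℝ) - 2) - (n:ℝ)) * 1 := by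
          apply mul_le_mul_of_nonneg_left hQle (mul_nonneg hK hsnn)
      _ ≤ 2 * α ^ (n - 1) * (α - 1) * (R - 1) ^ (α * ((n:ℝ) - 2) - (n:ℝ)) := by
          rw [mul_one]
          exact mul_le_mul_of_nonneg_left hsR hK
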